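/- arXiv:1003.4274 — 15 statements merged into one kernel-verified Lean document; each statement's English description precedes it below -/
import Mathlib

section
/- Let (X, π) be a finite symmetric two-player game with relative payoff game (X, Δ). Imitation is subject to a money pump in (X, π) if and only if (X, Δ) is a generalized rock-paper-scissors game. -/
/-- The imitator's action sequence: `y₀` initially; imitate the opponent's previous
action iff it earned a strictly positive relative payoff. -/
noncomputable def imitSeq {X : Type*} (Δ : X → X → ℝ) (x : ℕ → X) (y0 : X) : ℕ → X
  | 0 => y0
  | t + 1 => if 0 < Δ (x t) (imitSeq Δ x y0 t) then x t else imitSeq Δ x y0 t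

/-- Imitation is subject to a money pump. -/
def MoneyPump {X : Type*} (Δ : X → X → ℝ) : Prop :=
  ∀ M : ℝ, ∃ (y0 : X) (x : ℕ → X) (T : ℕ),
    M < ∑ t ∈ Finset.range (T + 1), Δ (x t) (imitSeq Δ x y0 t)

/-- A symmetric zero-sum game is a generalized rock-paper-scissors game if there is a
nonempty subset `S` of actions such that for every `y ∈ S` there is `x ∈ S` with
strictly positive payoff. -/
def GeneralizedRPS {X : Type*} (Δ : X → X → ℝ) : Prop :=
  ∃ S : Set X, S.Nonempty ∧ ∀ y ∈ S, ∃ x ∈ S, 0 < Δ x y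

/-!
Say `a` beats `b` when `0 < Δ a b`. Not being a generalized rock-paper-scissors game means
exactly that beating is well-founded. If it is not, there is an infinite chain of actions each
beating the previous one; an opponent playing along that chain is imitated at every step, and by
finiteness each step earns it at least the least positive value of `Δ`. If beating is
well-founded, the imitator only ever switches to an action of strictly smaller rank, so it
switches at most `rank y₀` times; the opponent gains at most `max Δ` at a switch and nothing
at the other steps.
-/

open Finset

theorem generalizedRPS_iff_not_wellFounded {X : Type*} (Δ : X → X → ℝ) :
    GeneralizedRPS Δ ↔ ¬ WellFounded (fun a b => 0 < Δ a b) := by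
  simp only [GeneralizedRPS, WellFounded.wellFounded_iff_has_min, not_forall, not_exists,
    not_and, not_not, exists_prop]

theorem WellFounded.exists_rank_nat {α : Type*} [Finite α] {r : α → α → Prop}
    (hwf : WellFounded r) : ∃ ρ : α → ℕ, ∀ a b, r a b → ρ a < ρ b := by
  refine ⟨fun a => {z | Relation.TransGen r z a}.ncard, fun a b hab => Set.ncard_lt_ncard ?_⟩
  refine ⟨fun z hz => Relation.TransGen.tail hz hab, fun hsub => ?_⟩
  exact hwf.transGen.irrefl.irrefl _ (hsub (Relation.TransGen.single hab))

section Imitation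

variable {X : Type*} (Δ : X → X → ℝ) (x : ℕ → X) (y0 : X) (t : ℕ)

theorem imitSeq_succ_of_pos (h : 0 < Δ (x t) (imitSeq Δ x y0 t)) :
    imitSeq Δ x y0 (t + 1) = x t := by
  simp only [imitSeq, if_pos h]

theorem imitSeq_succ_of_nonpos (h : Δ (x t) (imitSeq Δ x y0 t) ≤ 0) :
    imitSeq Δ x y0 (t + 1) = imitSeq Δ x y0 t := by
  simp only [imitSeq, if_neg h.not_gt]

theorem imitSeq_eq_of_forall_pos {z : ℕ → X} (hz : ∀ t, 0 < Δ (z (t + 1)) (z t)) :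
    imitSeq Δ (fun t => z (t + 1)) (z 0) = z := by
  funext t
  induction t with
  | zero => rfl
  | succ t ih =>
    rw [imitSeq_succ_of_pos]
    simp only [ih, hz]

variable {Δ x y0}

theorem relPayoff_le_mul_rank_sub {B : ℝ} (hB0 : 0 ≤ B) (hB : ∀ a b, Δ a b ≤ B) {ρ : X → ℕ}
    (hρ : ∀ a b, 0 < Δ a b → ρ a < ρ b) :
    Δ (x t) (imitSeq Δ x y0 t) ≤
      B * ((ρ (imitSeq Δ x y0 t) : ℝ) - ρ (imitSeq Δ x y0 (t + 1))) := by
  rcases lt_or_ge 0 (Δ (x t) (imitSeq Δ x y0 t)) with hpos | hnonpos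
  · have hdrop : (ρ (imitSeq Δ x y0 (t + 1)) : ℝ) + 1 ≤ ρ (imitSeq Δ x y0 t) := by
      rw [imitSeq_succ_of_pos Δ x y0 t hpos]
      exact_mod_cast hρ _ _ hpos
    nlinarith [hB (x t) (imitSeq Δ x y0 t)]
  · rw [imitSeq_succ_of_nonpos Δ x y0 t hnonpos, sub_self, mul_zero]
    exact hnonpos

theorem sum_relPayoff_le_mul_rank {B : ℝ} (hB0 : 0 ≤ B) (hB : ∀ a b, Δ a b ≤ B) {ρ : X → ℕ}
    (hρ : ∀ a b, 0 < Δ a b → ρ a < ρ b) (T : ℕ) :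
    ∑ t ∈ range (T + 1), Δ (x t) (imitSeq Δ x y0 t) ≤ B * ρ y0 :=
  calc ∑ t ∈ range (T + 1), Δ (x t) (imitSeq Δ x y0 t)
      ≤ ∑ t ∈ range (T + 1),
          B * ((ρ (imitSeq Δ x y0 t) : ℝ) - ρ (imitSeq Δ x y0 (t + 1))) :=
        sum_le_sum fun t _ => relPayoff_le_mul_rank_sub t hB0 hB hρ
    _ = B * ((ρ y0 : ℝ) - ρ (imitSeq Δ x y0 (T + 1))) := by
        rw [← mul_sum, sum_range_sub' (fun t => (ρ (imitSeq Δ x y0 t) : ℝ))]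
        rfl
    _ ≤ B * ρ y0 := by
        gcongr
        exact sub_le_self _ (Nat.cast_nonneg _)

end Imitation

theorem exists_pos_le_of_pos {X : Type*} [Finite X] (Δ : X → X → ℝ) : ∃ ε > 0, ∀ a b, 0 < Δ a b → ε ≤ Δ a b := by
  by_cases hpos : ∃ p : X × X, 0 < Δ p.1 p.2
  · have : Nonempty {p : X × X // 0 < Δ p.1 p.2} := nonempty_subtype.2 hpos
    obtain ⟨p, hp⟩ := Finite.exists_min fun p : {p : X × X // 0 < Δ p.1 p.2} => Δ p.1.1 p.1.2
    exact ⟨_, p.2, fun a b hab => hp ⟨(a, b), hab⟩⟩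
  · simp only [not_exists, Prod.forall] at hpos
    exact ⟨1, one_pos, fun a b hab => absurd hab (hpos a b)⟩

section Finite

variable {X : Type*} [Finite X] {Δ : X → X → ℝ}

theorem not_moneyPump_of_wellFounded (hwf : WellFounded (fun a b => 0 < Δ a b)) :
    ¬ MoneyPump Δ := by
  intro hmp
  obtain ⟨ρ, hρ⟩ := hwf.exists_rank_nat
  obtain ⟨N, hN⟩ := (Set.finite_range ρ).bddAbove
  obtain ⟨B, hB⟩ := (Set.finite_range (Function.uncurry Δ)).bddAbove
  have hΔB : ∀ a b, Δ a b ≤ max B 0 := fun a b =>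
    le_max_of_le_left (hB ⟨(a, b), rfl⟩)
  obtain ⟨y0, x, T, hT⟩ := hmp (max B 0 * N)
  have hy0 : (ρ y0 : ℝ) ≤ N := by exact_mod_cast hN ⟨y0, rfl⟩
  have hsum := sum_relPayoff_le_mul_rank (x := x) (y0 := y0) (le_max_right B 0) hΔB hρ T
  nlinarith [le_max_right B 0]

theorem moneyPump_of_not_wellFounded (hwf : ¬ WellFounded (fun a b => 0 < Δ a b)) :
    MoneyPump Δ := by
  rw [wellFounded_iff_isEmpty_descending_chain, not_isEmpty_iff] at hwf
  obtain ⟨⟨z, hz⟩⟩ := hwf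
  obtain ⟨ε, hε, hεΔ⟩ := exists_pos_le_of_pos Δ
  intro M
  obtain ⟨T, hT⟩ := exists_nat_gt (M / ε)
  refine ⟨z 0, fun t => z (t + 1), T, ?_⟩
  rw [imitSeq_eq_of_forall_pos Δ hz]
  calc M < T * ε := (div_lt_iff₀ hε).mp hT
    _ ≤ (T + 1) * ε := by nlinarith
    _ ≤ ∑ t ∈ range (T + 1), Δ (z (t + 1)) (z t) := by
        simpa using card_nsmul_le_sum (range (T + 1)) _ ε fun t _ => hεΔ _ _ (hz t)

end Finite

theorem stmt0_general {X : Type*} [Fintype X] (Δ : X → X → ℝ) :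
    MoneyPump Δ ↔ GeneralizedRPS Δ := by
  rw [generalizedRPS_iff_not_wellFounded]
  exact ⟨fun hmp hwf => not_moneyPump_of_wellFounded hwf hmp, moneyPump_of_not_wellFounded⟩

theorem stmt0 {X : Type*} [Fintype X] [Nonempty X] (π : X → X → ℝ)
    (Δ : X → X → ℝ) (hΔ : ∀ x y, Δ x y = π x y - π y x) :
    MoneyPump Δ ↔ GeneralizedRPS Δ :=
  stmt0_general Δ
end

section
/- Let (X, π) be a finite symmetric two-player game with relative payoff game (X, Δ). Then (X, Δ) is a generalized rock-paper-scissors game if and only if there exists an imitation cycle in (X, Δ). -/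
/-- An imitation cycle: a non-constant finite cyclic path of profiles along which the
first player always gets strictly positive relative payoff and the second player
imitates the first player's previous action. -/
def ImitationCycle {X : Type*} (Δ : X → X → ℝ) : Prop :=
  ∃ (n : ℕ) (x y : ℕ → X), 1 ≤ n ∧ (x n, y n) = (x 0, y 0) ∧
    (∃ t < n, (x t, y t) ≠ (x (t + 1), y (t + 1))) ∧
    ∀ t < n, 0 < Δ (x t) (y t) ∧ y (t + 1) = x t

theorem stmt2 {X : Type*} [Fintype X] [Nonempty X] (π : X → X → ℝ)
    (Δ : X → X → ℝ) (hΔ : ∀ x y, Δ x y = π x y - π y x) :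
    GeneralizedRPS Δ ↔ ImitationCycle Δ := by
  constructor
  · rintro ⟨S, ⟨s0, hs0⟩, hS⟩
    have hch : ∀ z : S, ∃ w : S, 0 < Δ w z := by
      rintro ⟨z, hz⟩
      obtain ⟨w, hw, hwz⟩ := hS z hz
      exact ⟨⟨w, hw⟩, hwz⟩
    choose f hf using hch
    set a : ℕ → S := fun k => f^[k] ⟨s0, hs0⟩ with ha
    have hstep : ∀ k, a (k+1) = f (a k) := fun k => Function.iterate_succ_apply' f k _
    have hpos : ∀ k, 0 < Δ (a (k+1)) (a k) := fun k => by rw [hstep]; exact hf (a k)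
    obtain ⟨i, j, hij, haij⟩ := Finite.exists_ne_map_eq_of_infinite a
    wlog hlt : i < j generalizing i j
    · exact this j i hij.symm haij.symm (by omega)
    refine ⟨j - i, fun t => (a (i + t + 1) : X), fun t => (a (i + t) : X), by omega, ?_, ?_, ?_⟩
    · have h1 : a (i + (j - i)) = a i := by rw [show i + (j-i) = j by omega, ← haij]
      have h2 : a (i + (j - i) + 1) = a (i + 1) := by rw [hstep, h1, ← hstep]
      simp only [h1, h2, Nat.add_zero]
    · refine ⟨0, by omega, fun h => ?_⟩
      have h2 : (a (i+1) : X) = (a i : X) := by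
        have := congrArg Prod.snd h
        simpa using this.symm
      have := hpos i
      rw [h2] at this
      have hz : Δ (a i : X) (a i : X) = 0 := by rw [hΔ]; ring
      rw [hz] at this
      exact lt_irrefl 0 this
    · intro t ht
      refine ⟨hpos (i + t), ?_⟩
      show (a (i + (t + 1)) : X) = (a (i + t + 1) : X)
      congr 2
  · rintro ⟨n, x, y, hn, hcyc, _, hall⟩
    refine ⟨y '' {t | t < n}, ⟨y 0, 0, hn, rfl⟩, ?_⟩
    rintro z ⟨t, ht, rfl⟩
    have ht' : t < n := ht
    refine ⟨x t, ?_, (hall t ht).1⟩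
    have hx : x t = y (t+1) := ((hall t ht).2).symm
    by_cases h : t + 1 < n
    · rw [hx]
      exact Set.mem_image_of_mem y (show t + 1 ∈ {t | t < n} from h)
    · have hn1 : t + 1 = n := by omega
      have hyn : y n = y 0 := congrArg Prod.snd hcyc
      have hx0 : x t = y 0 := by rw [hx, hn1, hyn]
      rw [hx0]
      exact Set.mem_image_of_mem y (show 0 ∈ {t | t < n} from hn)
end

section
/- Let (X, π) be a finite symmetric two-player game with relative payoff game (X, Δ). If the zero-sum game (X, Δ) has no pure saddle point, then imitation is subject to a money pump. -/
theorem exists_pos_of_not_exists_saddle {X : Type*} {Δ : X → X → ℝ}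
    (hskew : ∀ a b, Δ a b = -Δ b a)
    (hnosaddle : ¬ ∃ xs ys : X, ∀ x y : X, Δ x ys ≤ Δ xs ys ∧ Δ xs ys ≤ Δ xs y) (a : X) :
    ∃ b, 0 < Δ b a := by
  by_contra! hle
  have hdiag : Δ a a = 0 := by linarith [hskew a a]
  exact hnosaddle ⟨a, a, fun x y => ⟨hdiag ▸ hle x, by linarith [hskew a y, hle y]⟩⟩

theorem imitSeq_iterate {X : Type*} {Δ : X → X → ℝ} {f : X → X} (hf : ∀ a, 0 < Δ (f a) a)
    (y0 : X) (t : ℕ) : imitSeq Δ (fun s => f (f^[s] y0)) y0 t = f^[t] y0 := by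
  induction t with
  | zero => rfl
  | succ t ih =>
    rw [imitSeq, ih, if_pos (hf _), Function.iterate_succ_apply']

theorem moneyPump_of_forall_exists_pos {X : Type*} [Finite X] [Nonempty X] {Δ : X → X → ℝ}
    (hbeat : ∀ a, ∃ b, 0 < Δ b a) : MoneyPump Δ := by
  choose f hf using hbeat
  obtain ⟨a₀, ha₀⟩ := Finite.exists_min fun a => Δ (f a) a
  set ε := Δ (f a₀) a₀
  intro M
  obtain ⟨T, hT⟩ := Archimedean.arch M (hf a₀)
  obtain ⟨y0⟩ := ‹Nonempty X›
  refine ⟨y0, fun s => f (f^[s] y0), T, ?_⟩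
  have hround : ∀ t ∈ Finset.range (T + 1),
      ε ≤ Δ (f (f^[t] y0)) (imitSeq Δ (fun s => f (f^[s] y0)) y0 t) := fun t _ => by
    rw [imitSeq_iterate hf]
    exact ha₀ _
  calc M ≤ T • ε := hT
    _ < (T + 1) • ε := by simp only [nsmul_eq_mul]; push_cast; linarith [hf a₀]
    _ = (Finset.range (T + 1)).card • ε := by rw [Finset.card_range]
    _ ≤ _ := Finset.card_nsmul_le_sum _ _ _ hround

theorem stmt3 {X : Type*} [Fintype X] [Nonempty X] (π : X → X → ℝ)
    (Δ : X → X → ℝ) (hΔ : ∀ x y, Δ x y = π x y - π y x)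
    (hnosaddle : ¬ ∃ xs ys : X, ∀ x y : X, Δ x ys ≤ Δ xs ys ∧ Δ xs ys ≤ Δ xs y) :
    MoneyPump Δ := by
  have hskew : ∀ a b, Δ a b = -Δ b a := fun a b => by rw [hΔ, hΔ]; ring
  exact moneyPump_of_forall_exists_pos (exists_pos_of_not_exists_saddle hskew hnosaddle)
end

section
/- In any symmetric two-player game (X, π) in which X has exactly two actions, imitation is essentially unbeatable: for every initial action y_0 ∈ X, every opponent sequence (x_t), and every T, ∑_{t=0}^{T} Δ(x_t, y_t) ≤ max_{x,y ∈ X} Δ(x, y). Moreover, along the play there is at most one period t with Δ(x_t, y_t) > 0. -/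
/-- Imitation is essentially unbeatable: in total, the opponent can beat the imitator
by at most the maximal one-period relative payoff differential. -/
def EssentiallyUnbeatable {X : Type*} (Δ : X → X → ℝ) : Prop :=
  ∀ (y0 : X) (x : ℕ → X) (T : ℕ),
    ∑ t ∈ Finset.range (T + 1), Δ (x t) (imitSeq Δ x y0 t)
      ≤ sSup (Set.range fun p : X × X => Δ p.1 p.2)

theorem stmt6 {X : Type*} [Fintype X] (hcard : Fintype.card X = 2)
    (π : X → X → ℝ) (Δ : X → X → ℝ) (hΔ : ∀ x y, Δ x y = π x y - π y x) :
    EssentiallyUnbeatable Δ ∧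
      ∀ (y0 : X) (x : ℕ → X) (s t : ℕ),
        0 < Δ (x s) (imitSeq Δ x y0 s) → 0 < Δ (x t) (imitSeq Δ x y0 t) → s = t := by
  classical
  have hself : ∀ a : X, Δ a a = 0 := fun a => by rw [hΔ]; ring
  have hanti : ∀ a b : X, Δ a b = -Δ b a := fun a b => by rw [hΔ, hΔ]; ring
  -- with two elements, any two elements distinct from a common one are equal
  have hcard2 : ∀ a b c : X, a ≠ b → a ≠ c → b = c := by
    intro a b c hab hac
    by_contra hbc
    have : ({a, b, c} : Finset X).card = 3 := by
      rw [Finset.card_insert_of_notMem (by simp [hab, hac]),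
        Finset.card_insert_of_notMem (by simp [hbc]), Finset.card_singleton]
    have hle : ({a, b, c} : Finset X).card ≤ Fintype.card X :=
      Finset.card_le_card (Finset.subset_univ _)
    omega
  -- after a positive period t, the imitator plays x t forever and no later period is positive
  have key : ∀ (y0 : X) (x : ℕ → X) (t : ℕ),
      0 < Δ (x t) (imitSeq Δ x y0 t) → ∀ s, t < s → imitSeq Δ x y0 s = x t := by
    intro y0 x t hpos s hs
    have hxy : x t ≠ imitSeq Δ x y0 t := by
      intro h; rw [h, hself] at hpos; exact lt_irrefl _ hpos
    have hnotpos : ∀ a : X, ¬ 0 < Δ a (x t) := by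
      intro a ha
      by_cases hax : a = x t
      · rw [hax, hself] at ha; exact lt_irrefl _ ha
      · have : a = imitSeq Δ x y0 t := hcard2 (x t) a _ (Ne.symm hax) hxy
        rw [this, hanti] at ha
        linarith
    induction s with
    | zero => omega
    | succ n ih =>
      rcases Nat.lt_succ_iff_lt_or_eq.mp hs with h | h
      · have hn := ih h
        show (if 0 < Δ (x n) (imitSeq Δ x y0 n) then x n else imitSeq Δ x y0 n) = x t
        rw [hn, if_neg (hnotpos _)]
      · subst h
        show (if 0 < Δ (x t) (imitSeq Δ x y0 t) then x t else imitSeq Δ x y0 t) = x t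
        rw [if_pos hpos]
  -- uniqueness of the positive period
  have huniq : ∀ (y0 : X) (x : ℕ → X) (s t : ℕ),
      0 < Δ (x s) (imitSeq Δ x y0 s) → 0 < Δ (x t) (imitSeq Δ x y0 t) → s = t := by
    intro y0 x s t hs ht
    rcases lt_trichotomy s t with h | h | h
    · exfalso
      have hxy : x s ≠ imitSeq Δ x y0 s := by
        intro hh; rw [hh, hself] at hs; exact lt_irrefl _ hs
      have := key y0 x s hs t h
      rw [this] at ht
      by_cases hax : x t = x s
      · rw [hax, hself] at ht; exact lt_irrefl _ ht
      · have : x t = imitSeq Δ x y0 s := hcard2 (x s) (x t) _ (Ne.symm hax) hxy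
        rw [this, hanti] at ht
        linarith
    · exact h
    · exfalso
      have hxy : x t ≠ imitSeq Δ x y0 t := by
        intro hh; rw [hh, hself] at ht; exact lt_irrefl _ ht
      have := key y0 x t ht s h
      rw [this] at hs
      by_cases hax : x s = x t
      · rw [hax, hself] at hs; exact lt_irrefl _ hs
      · have : x s = imitSeq Δ x y0 t := hcard2 (x t) (x s) _ (Ne.symm hax) hxy
        rw [this, hanti] at hs
        linarith
  refine ⟨?_, huniq⟩
  intro y0 x T
  set M := sSup (Set.range fun p : X × X => Δ p.1 p.2) with hM
  have hbdd : BddAbove (Set.range fun p : X × X => Δ p.1 p.2) :=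
    (Set.finite_range _).bddAbove
  have hle : ∀ a b : X, Δ a b ≤ M := fun a b => le_csSup hbdd ⟨(a, b), rfl⟩
  have hM0 : 0 ≤ M := by
    have := hle y0 y0
    rwa [hself] at this
  by_cases hex : ∃ t ∈ Finset.range (T + 1), 0 < Δ (x t) (imitSeq Δ x y0 t)
  · obtain ⟨t0, ht0mem, ht0⟩ := hex
    have herase : ∑ s ∈ (Finset.range (T + 1)).erase t0,
        Δ (x s) (imitSeq Δ x y0 s) ≤ 0 := by
      apply Finset.sum_nonpos
      intro s hsmem
      by_contra hpos
      push_neg at hpos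
      exact (Finset.mem_erase.mp hsmem).1 (huniq y0 x s t0 hpos ht0)
    calc ∑ t ∈ Finset.range (T + 1), Δ (x t) (imitSeq Δ x y0 t)
        = Δ (x t0) (imitSeq Δ x y0 t0)
          + ∑ s ∈ (Finset.range (T + 1)).erase t0, Δ (x s) (imitSeq Δ x y0 s) :=
          (Finset.add_sum_erase _ _ ht0mem).symm
      _ ≤ Δ (x t0) (imitSeq Δ x y0 t0) + 0 := by linarith
      _ ≤ M := by simpa using hle _ _
  · push_neg at hex
    have : ∑ t ∈ Finset.range (T + 1), Δ (x t) (imitSeq Δ x y0 t) ≤ 0 :=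
      Finset.sum_nonpos fun t ht => hex t ht
    linarith
end

section
/- Let (X, π) be a symmetric two-player game with bounded payoff function and relative payoff game (X, Δ). If X is a compact topological space, Δ is upper semicontinuous on X × X, and Δ is additively separable, i.e., Δ(x, y) = f(x) + g(y) for some functions f, g : X → ℝ, then imitation is essentially unbeatable: for every initial action y_0 ∈ X, every opponent sequence (x_t), and every T, ∑_{t=0}^{T} Δ(x_t, y_t) ≤ sup_{x,y ∈ X} Δ(x, y). -/
theorem stmt7 {X : Type*} [TopologicalSpace X] [CompactSpace X] [Nonempty X]
    (π : X → X → ℝ) (hbdd : ∃ C : ℝ, ∀ x y, |π x y| ≤ C)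
    (Δ : X → X → ℝ) (hΔ : ∀ x y, Δ x y = π x y - π y x)
    (husc : UpperSemicontinuous fun p : X × X => Δ p.1 p.2)
    (f g : X → ℝ) (hsep : ∀ x y, Δ x y = f x + g y) :
    EssentiallyUnbeatable Δ := by
  intro y0 x T
  obtain ⟨C, hC⟩ := hbdd
  have hg : ∀ y : X, g y = -f y := by
    intro y
    have h0 : Δ y y = 0 := by rw [hΔ]; ring
    have := hsep y y
    linarith
  have hΔf : ∀ a b : X, Δ a b = f a - f b := by
    intro a b; rw [hsep, hg]; ring
  set y := imitSeq Δ x y0 with hy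
  -- monotonicity of f along imitator sequence w.r.t x
  have hstep : ∀ t, f (x t) ≤ f (y (t + 1)) := by
    intro t
    show f (x t) ≤ f (if 0 < Δ (x t) (y t) then x t else y t)
    split_ifs with h
    · exact le_refl _
    · rw [hΔf] at h; push_neg at h; linarith
  have key : ∀ n, ∑ t ∈ Finset.range n, Δ (x t) (y t) ≤ f (y n) - f y0 := by
    intro n
    induction n with
    | zero => simp [hy, imitSeq]
    | succ n ih =>
      rw [Finset.sum_range_succ]
      have := hstep n
      rw [hΔf (x n) (y n)]
      linarith
  have hle : ∑ t ∈ Finset.range (T + 1), Δ (x t) (y t) ≤ Δ (y (T + 1)) y0 := by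
    have := key (T + 1)
    rw [hΔf]; linarith
  refine hle.trans (le_csSup ?_ ⟨(y (T + 1), y0), rfl⟩)
  refine ⟨2 * C, ?_⟩
  rintro _ ⟨p, rfl⟩
  have h1 := hC p.1 p.2
  have h2 := hC p.2 p.1
  have := abs_le.mp h1
  have := abs_le.mp h2
  simp only [hΔ]
  linarith
end

section
/- Let (X, π) be a symmetric two-player game where X is a nonempty compact topological space and the payoff function can be written as π(x, y) = f(x) + g(y) + a(x, y) for some continuous functions f, g : X → ℝ and a symmetric function a : X × X → ℝ (i.e., a(x, y) = a(y, x) for all x, y ∈ X). Then imitation is essentially unbeatable: for every initial action y_0 ∈ X, every opponent sequence (x_t), and every T, ∑_{t=0}^{T} Δ(x_t, y_t) ≤ sup_{x,y ∈ X} Δ(x, y). -/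
theorem stmt8 {X : Type*} [TopologicalSpace X] [CompactSpace X] [Nonempty X]
    (π : X → X → ℝ) (f g : X → ℝ) (a : X → X → ℝ)
    (hf : Continuous f) (hg : Continuous g)
    (hsym : ∀ x y, a x y = a y x)
    (hπ : ∀ x y, π x y = f x + g y + a x y)
    (Δ : X → X → ℝ) (hΔ : ∀ x y, Δ x y = π x y - π y x) :
    EssentiallyUnbeatable Δ := by
  set h : X → ℝ := fun z => f z - g z with hh
  have hΔ' : ∀ x y, Δ x y = h x - h y := by
    intro x y
    rw [hΔ, hπ, hπ, hsym x y]
    show f x + g y + a y x - (f y + g x + a y x) = (f x - g x) - (f y - g y)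
    ring
  intro y0 x T
  set Y := imitSeq Δ x y0 with hY
  -- telescoping bound
  have key : ∀ T : ℕ, ∑ t ∈ Finset.range (T + 1), Δ (x t) (Y t) ≤ h (Y (T + 1)) - h (Y 0) := by
    intro T
    induction T with
    | zero =>
      simp only [zero_add, Finset.sum_range_one]
      have e : Y 1 = if 0 < Δ (x 0) (Y 0) then x 0 else Y 0 := rfl
      by_cases hc : 0 < Δ (x 0) (Y 0)
      · rw [e, if_pos hc, hΔ']
      · rw [e, if_neg hc]
        linarith [not_lt.mp hc]
    | succ n ih =>
      rw [Finset.sum_range_succ]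
      have e : Y (n + 2) = if 0 < Δ (x (n + 1)) (Y (n + 1)) then x (n + 1) else Y (n + 1) := rfl
      by_cases hc : 0 < Δ (x (n + 1)) (Y (n + 1))
      · rw [e, if_pos hc, hΔ' (x (n+1))]
        linarith
      · rw [e, if_neg hc]
        linarith [not_lt.mp hc]
  -- boundedness of Δ on the range
  have hch : Continuous h := hf.sub hg
  obtain ⟨M, hM⟩ := (isCompact_range hch).bddAbove
  obtain ⟨m, hm⟩ := (isCompact_range hch).bddBelow
  have hbdd : BddAbove (Set.range fun p : X × X => Δ p.1 p.2) := by
    refine ⟨M - m, ?_⟩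
    rintro _ ⟨p, rfl⟩
    have h1 : h p.1 ≤ M := hM ⟨p.1, rfl⟩
    have h2 : m ≤ h p.2 := hm ⟨p.2, rfl⟩
    dsimp only
    rw [hΔ']
    linarith
  have hmem : Δ (Y (T + 1)) (Y 0) ∈ Set.range fun p : X × X => Δ p.1 p.2 :=
    ⟨(Y (T + 1), Y 0), rfl⟩
  calc ∑ t ∈ Finset.range (T + 1), Δ (x t) (Y t) ≤ h (Y (T + 1)) - h (Y 0) := key T
    _ = Δ (Y (T + 1)) (Y 0) := (hΔ' _ _).symm
    _ ≤ sSup (Set.range fun p : X × X => Δ p.1 p.2) := le_csSup hbdd hmem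
end

section
/- Let (X, π) be a finite symmetric two-player game whose action set X is endowed with a linear order, and let (X, Δ) be its relative payoff game. If Δ has increasing differences or decreasing differences on X × X, then imitation is essentially unbeatable: for every initial action y_0 ∈ X, every opponent sequence (x_t), and every T, ∑_{t=0}^{T} Δ(x_t, y_t) ≤ max_{x,y ∈ X} Δ(x, y). -/
section Differences

variable {X : Type*} [LinearOrder X] {f : X → X → ℝ}

def IncreasingDifferences (f : X → X → ℝ) : Prop :=
  ∀ x' x'' y' y'' : X, x' < x'' → y' < y'' → f x'' y' - f x' y' ≤ f x'' y'' - f x' y''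

def DecreasingDifferences (f : X → X → ℝ) : Prop :=
  ∀ x' x'' y' y'' : X, x' < x'' → y' < y'' → f x'' y'' - f x' y'' ≤ f x'' y' - f x' y'

lemma IncreasingDifferences.decreasingDifferences (hanti : ∀ x y, f y x = -f x y)
    (h : IncreasingDifferences f) : DecreasingDifferences f := by
  intro x' x'' y' y'' hx hy
  have := h y' y'' x' x'' hy hx
  linarith [hanti x' y', hanti x' y'', hanti x'' y', hanti x'' y'']

lemma DecreasingDifferences.increasingDifferences (hanti : ∀ x y, f y x = -f x y)
    (h : DecreasingDifferences f) : IncreasingDifferences f := by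
  intro x' x'' y' y'' hx hy
  have := h y' y'' x' x'' hy hx
  linarith [hanti x' y', hanti x' y'', hanti x'' y', hanti x'' y'']

lemma sub_eq_sub_of_increasingDifferences_of_decreasingDifferences
    (hinc : IncreasingDifferences f) (hdec : DecreasingDifferences f) (x' x'' y' y'' : X) :
    f x'' y' - f x' y' = f x'' y'' - f x' y'' := by
  have key : ∀ {x' x''}, x' < x'' → ∀ y' y'', f x'' y' - f x' y' = f x'' y'' - f x' y'' := by
    intro x' x'' hx y' y''
    rcases lt_trichotomy y' y'' with hy | rfl | hy
    · exact le_antisymm (hinc _ _ _ _ hx hy) (hdec _ _ _ _ hx hy)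
    · rfl
    · exact (le_antisymm (hinc _ _ _ _ hx hy) (hdec _ _ _ _ hx hy)).symm
  rcases lt_trichotomy x' x'' with hx | rfl | hx
  · exact key hx y' y''
  · simp
  · linarith [key hx y' y'']

lemma eq_sub_of_antisymm_of_decreasingDifferences (hanti : ∀ x y, f y x = -f x y)
    (hdec : DecreasingDifferences f) (x y z : X) : f x y = f x z - f y z := by
  have hdiag : f y y = 0 := by linarith [hanti y y]
  have := sub_eq_sub_of_increasingDifferences_of_decreasingDifferences
    (hdec.increasingDifferences hanti) hdec y x z y
  linarith

end Differences

section Imitation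

variable {X : Type*} {Δ : X → X → ℝ}

lemma le_apply_imitSeq_succ (hdiag : ∀ y, Δ y y = 0) (x : ℕ → X) (y0 : X) (t : ℕ) :
    Δ (x t) (imitSeq Δ x y0 t) ≤ Δ (imitSeq Δ x y0 (t + 1)) (imitSeq Δ x y0 t) := by
  rw [imitSeq]
  split_ifs with h
  · rfl
  · rw [hdiag]
    exact not_lt.mp h

lemma sum_range_le_apply_imitSeq (hpot : ∀ x y z : X, Δ x y = Δ x z - Δ y z)
    (x : ℕ → X) (y0 : X) (n : ℕ) :
    ∑ t ∈ Finset.range n, Δ (x t) (imitSeq Δ x y0 t) ≤ Δ (imitSeq Δ x y0 n) y0 := by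
  set y := imitSeq Δ x y0
  have hdiag : ∀ z, Δ z z = 0 := fun z => by simpa using hpot z z z
  calc ∑ t ∈ Finset.range n, Δ (x t) (y t)
      ≤ ∑ t ∈ Finset.range n, (Δ (y (t + 1)) y0 - Δ (y t) y0) :=
        Finset.sum_le_sum fun t _ => (le_apply_imitSeq_succ hdiag x y0 t).trans_eq (hpot _ _ y0)
    _ = Δ (y n) y0 - Δ (y 0) y0 := Finset.sum_range_sub (fun t => Δ (y t) y0) n
    _ = Δ (y n) y0 := by rw [show y 0 = y0 from rfl, hdiag, sub_zero]

end Imitation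

theorem stmt9_general {X : Type*} [Fintype X] [LinearOrder X]
    (π : X → X → ℝ) (Δ : X → X → ℝ) (hΔ : ∀ x y, Δ x y = π x y - π y x)
    (hdiff :
      (∀ x' x'' y' y'' : X, x' < x'' → y' < y'' →
        Δ x'' y' - Δ x' y' ≤ Δ x'' y'' - Δ x' y'') ∨
      (∀ x' x'' y' y'' : X, x' < x'' → y' < y'' →
        Δ x'' y'' - Δ x' y'' ≤ Δ x'' y' - Δ x' y')) :
    EssentiallyUnbeatable Δ := by
  have hanti : ∀ x y, Δ y x = -Δ x y := fun x y => by rw [hΔ, hΔ]; ring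
  have hdec : DecreasingDifferences Δ :=
    hdiff.elim (IncreasingDifferences.decreasingDifferences hanti) id
  intro y0 x T
  calc ∑ t ∈ Finset.range (T + 1), Δ (x t) (imitSeq Δ x y0 t)
      ≤ Δ (imitSeq Δ x y0 (T + 1)) y0 :=
        sum_range_le_apply_imitSeq (eq_sub_of_antisymm_of_decreasingDifferences hanti hdec) x y0 _
    _ ≤ sSup (Set.range fun p : X × X => Δ p.1 p.2) :=
        le_csSup (Set.finite_range _).bddAbove ⟨(imitSeq Δ x y0 (T + 1), y0), rfl⟩

theorem stmt9 {X : Type*} [Fintype X] [Nonempty X] [LinearOrder X]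
    (π : X → X → ℝ) (Δ : X → X → ℝ) (hΔ : ∀ x y, Δ x y = π x y - π y x)
    (hdiff :
      (∀ x' x'' y' y'' : X, x' < x'' → y' < y'' →
        Δ x'' y' - Δ x' y' ≤ Δ x'' y'' - Δ x' y'') ∨
      (∀ x' x'' y' y'' : X, x' < x'' → y' < y'' →
        Δ x'' y'' - Δ x' y'' ≤ Δ x'' y' - Δ x' y')) :
    EssentiallyUnbeatable Δ :=
  stmt9_general π Δ hΔ hdiff
end

section
/- Let (X, π) be a finite symmetric two-player game with relative payoff game (X, Δ). If (X, Δ) is an exact potential game, i.e., there exists P : X × X → ℝ such that for all y ∈ X and all x, x' ∈ X, Δ(x, y) − Δ(x', y) = P(x, y) − P(x', y) and Δ(x, y) − Δ(x', y) = P(y, x) − P(y, x'), then imitation is essentially unbeatable: for every initial action y_0 ∈ X, every opponent sequence (x_t), and every T, ∑_{t=0}^{T} Δ(x_t, y_t) ≤ max_{x,y ∈ X} Δ(x, y). -/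
theorem stmt10 {X : Type*} [Fintype X] [Nonempty X]
    (π : X → X → ℝ) (Δ : X → X → ℝ) (hΔ : ∀ x y, Δ x y = π x y - π y x)
    (P : X → X → ℝ)
    (hP : ∀ y x x' : X, Δ x y - Δ x' y = P x y - P x' y ∧
      Δ x y - Δ x' y = P y x - P y x') :
    EssentiallyUnbeatable Δ := by
  have skew : ∀ x y, Δ x y = -Δ y x := by intro x y; rw [hΔ, hΔ]; ring
  -- 4-cycle condition from exact potential
  have cyc : ∀ x x' y y', Δ x y - Δ x' y + Δ x' y' - Δ x y' = 0 := by
    intro x x' y y'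
    have A := (hP y x x').1
    have B := (hP x' y y').2
    have C := (hP y' x' x).1
    have D := (hP x y' y).2
    have s1 := skew y x'
    have s2 := skew y' x'
    have s3 := skew y' x
    have s4 := skew y x
    linarith
  have add : ∀ x y z, Δ x z = Δ x y + Δ y z := by
    intro x y z
    have h := cyc x y z y
    have h0 : Δ y y = 0 := by have := skew y y; linarith
    have hs := skew y z
    linarith
  obtain ⟨a⟩ := (inferInstance : Nonempty X)
  set f : X → ℝ := fun x => Δ x a with hf
  have hrep : ∀ x y, Δ x y = f x - f y := by
    intro x y
    have := add x a y
    have := skew a y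
    simp only [hf]
    have h1 : Δ x y = Δ x a + Δ a y := add x a y
    have h2 : Δ a y = -Δ y a := skew a y
    linarith
  intro y0 x T
  set y : ℕ → X := imitSeq Δ x y0 with hy
  have key : ∀ n, ∑ t ∈ Finset.range n, Δ (x t) (y t) ≤ f (y n) - f (y 0) := by
    intro n
    induction n with
    | zero => simp
    | succ n ih =>
      rw [Finset.sum_range_succ]
      have hstep : f (y (n + 1)) = if 0 < Δ (x n) (y n) then f (x n) else f (y n) := by
        simp only [hy, imitSeq]
        split <;> rfl
      by_cases h : 0 < Δ (x n) (y n)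
      · rw [hstep, if_pos h]
        have := hrep (x n) (y n)
        linarith
      · rw [hstep, if_neg h]
        push_neg at h
        linarith
  have hb : f (y (T + 1)) - f (y 0) = Δ (y (T + 1)) (y 0) := (hrep _ _).symm
  have hfin : (Set.range fun p : X × X => Δ p.1 p.2).Finite := Set.finite_range _
  have hle : Δ (y (T + 1)) (y 0) ≤ sSup (Set.range fun p : X × X => Δ p.1 p.2) :=
    le_csSup hfin.bddAbove ⟨(y (T + 1), y 0), rfl⟩
  calc ∑ t ∈ Finset.range (T + 1), Δ (x t) (y t)
      ≤ f (y (T + 1)) - f (y 0) := key (T + 1)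
    _ = Δ (y (T + 1)) (y 0) := hb
    _ ≤ _ := hle
end

section
/- Let (X, Δ) be the relative payoff game of a finite symmetric two-player game. If (X, Δ) does not contain a strict improvement cycle, then it does not contain an imitation cycle. -/
/-- A strict improvement cycle in the symmetric zero-sum game `(X, Δ)`: a cyclic
sequential path of profiles in which at each step exactly one player changes her
action and strictly improves her own payoff (player 1's payoff at `(x, y)` is
`Δ x y`, player 2's is `Δ y x`). -/
def StrictImprovementCycle {X : Type*} (Δ : X → X → ℝ) : Prop :=
  ∃ (m : ℕ) (x y : ℕ → X), 1 ≤ m ∧ (x m, y m) = (x 0, y 0) ∧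
    ∀ t < m,
      (x (t + 1) = x t ∧ y (t + 1) ≠ y t ∧ Δ (y t) (x t) < Δ (y (t + 1)) (x (t + 1))) ∨
      (y (t + 1) = y t ∧ x (t + 1) ≠ x t ∧ Δ (x t) (y t) < Δ (x (t + 1)) (y (t + 1)))

theorem stmt11 {X : Type*} [Fintype X] [Nonempty X] (π : X → X → ℝ)
    (Δ : X → X → ℝ) (hΔ : ∀ x y, Δ x y = π x y - π y x)
    (h : ¬ StrictImprovementCycle Δ) :
    ¬ ImitationCycle Δ := by
  rintro ⟨n, x, y, hn, hcyc, -, hstep⟩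
  have hskew : ∀ a b, Δ a b = -Δ b a := by intro a b; rw [hΔ, hΔ]; ring
  have hdiag : ∀ a, Δ a a = 0 := by intro a; rw [hΔ]; ring
  -- all "forward" payoffs along the cycle are positive, including at index n
  have hpos : ∀ t ≤ n, 1 ≤ t → 0 < Δ (x t) (y t) := by
    intro t ht h1
    rcases eq_or_lt_of_le ht with heq | hlt
    · have hx : x n = x 0 := congrArg Prod.fst hcyc
      have hy : y n = y 0 := congrArg Prod.snd hcyc
      rw [heq, hx, hy]
      exact (hstep 0 hn).1
    · exact (hstep t hlt).1
  apply h
  refine ⟨2 * n, fun t => x (t / 2), fun t => if t % 2 = 0 then y (t / 2) else x (t / 2),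
    by omega, ?_, ?_⟩
  · have e1 : 2 * n / 2 = n := by omega
    have e2 : 2 * n % 2 = 0 := by omega
    simp only [e1, e2, Nat.zero_div, Nat.zero_mod, if_pos rfl]
    exact hcyc
  · intro t ht
    rcases Nat.even_or_odd t with ⟨s, hs⟩ | ⟨s, hs⟩
    · -- t = 2s, player 2 moves from y s to x s
      subst hs
      have hsn : s < n := by omega
      have h1 : (s + s) / 2 = s := by omega
      have h2 : (s + s + 1) / 2 = s := by omega
      have h3 : (s + s) % 2 = 0 := by omega
      have h4 : (s + s + 1) % 2 = 1 := by omega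
      left
      simp only [h1, h2, h3, h4]
      norm_num
      have hxy := (hstep s hsn).1
      have hne : x s ≠ y s := fun he => by rw [he, hdiag] at hxy; exact lt_irrefl _ hxy
      refine ⟨hne, ?_⟩
      rw [hdiag, hskew]
      linarith
    · -- t = 2s+1, player 1 moves from x s to x (s+1)
      subst hs
      have hsn : s < n := by omega
      have h1 : (2 * s + 1) / 2 = s := by omega
      have h2 : (2 * s + 1 + 1) / 2 = s + 1 := by omega
      have h3 : (2 * s + 1) % 2 = 1 := by omega
      have h4 : (2 * s + 1 + 1) % 2 = 0 := by omega
      right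
      simp only [h1, h2, h3, h4, if_pos rfl]
      norm_num
      have himit : y (s + 1) = x s := (hstep s hsn).2
      have hp : 0 < Δ (x (s + 1)) (y (s + 1)) := hpos (s + 1) (by omega) (by omega)
      have hne : x (s + 1) ≠ x s := fun he => by
        rw [himit, he, hdiag] at hp; exact lt_irrefl _ hp
      refine ⟨himit, hne, ?_⟩
      rw [himit] at hp ⊢
      rw [hdiag]
      linarith
end

section
/- Let (X, Δ) be the relative payoff game of a symmetric two-player game and suppose Δ is quasiconcave with respect to a linear order ≤ on X. If x* is a fESS and x lies between y and x* (i.e., y ≤ x ≤ x* or x* ≤ x ≤ y), then Δ(x, y) ≥ 0 (equivalently Δ(y, x) ≤ 0). -/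
theorem stmt13 {X : Type*} [LinearOrder X] [Nonempty X]
    (π : X → X → ℝ) (Δ : X → X → ℝ) (hΔ : ∀ x y, Δ x y = π x y - π y x)
    (hqc : ∀ y x x' x'' : X, x < x' → x' < x'' → min (Δ x y) (Δ x'' y) ≤ Δ x' y)
    (xs : X) (hfess : ∀ x : X, 0 ≤ Δ xs x)
    (x y : X) (hbet : (y ≤ x ∧ x ≤ xs) ∨ (xs ≤ x ∧ x ≤ y)) :
    0 ≤ Δ x y ∧ Δ y x ≤ 0 := by
  have hself : ∀ z : X, Δ z z = 0 := by intro z; simp [hΔ]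
  have hanti : ∀ a b : X, Δ b a = -Δ a b := by intro a b; rw [hΔ, hΔ]; ring
  have h1 : 0 ≤ Δ x y := by
    rcases hbet with ⟨h1, h2⟩ | ⟨h1, h2⟩
    · rcases eq_or_lt_of_le h1 with rfl | h1
      · simp [hself]
      · rcases eq_or_lt_of_le h2 with rfl | h2
        · exact hfess y
        · have := hqc y y x xs h1 h2
          have h0 : min (Δ y y) (Δ xs y) = 0 := by
            rw [hself]; exact min_eq_left (hfess y)
          linarith
    · rcases eq_or_lt_of_le h1 with rfl | h1
      · exact hfess y
      · rcases eq_or_lt_of_le h2 with rfl | h2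
        · simp [hself]
        · have := hqc y xs x y h1 h2
          have h0 : min (Δ xs y) (Δ y y) = 0 := by
            rw [hself]; exact min_eq_right (hfess y)
          linarith
  exact ⟨h1, by rw [hanti]; linarith⟩
end

section
/- Let (X, Δ) be the relative payoff game of a symmetric two-player game and suppose Δ is quasiconcave with respect to a linear order ≤ on X. If x* and x** are both fESS, then every x ∈ X with x* ≤ x ≤ x** (or x** ≤ x ≤ x*) is also a fESS. -/
theorem stmt14 {X : Type*} [LinearOrder X] [Nonempty X]
    (π : X → X → ℝ) (Δ : X → X → ℝ) (hΔ : ∀ x y, Δ x y = π x y - π y x)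
    (hqc : ∀ y x x' x'' : X, x < x' → x' < x'' → min (Δ x y) (Δ x'' y) ≤ Δ x' y)
    (xs xss : X) (hfess : ∀ x : X, 0 ≤ Δ xs x) (hfess' : ∀ x : X, 0 ≤ Δ xss x)
    (x : X) (hbet : (xs ≤ x ∧ x ≤ xss) ∨ (xss ≤ x ∧ x ≤ xs)) :
    ∀ y : X, 0 ≤ Δ x y := by
  intro y
  rcases hbet with ⟨h1, h2⟩ | ⟨h1, h2⟩
  · rcases eq_or_lt_of_le h1 with rfl | h1'
    · exact hfess y
    rcases eq_or_lt_of_le h2 with rfl | h2'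
    · exact hfess' y
    have h := hqc y xs x xss h1' h2'
    have := le_min (hfess y) (hfess' y)
    linarith
  · rcases eq_or_lt_of_le h1 with rfl | h1'
    · exact hfess' y
    rcases eq_or_lt_of_le h2 with rfl | h2'
    · exact hfess y
    have h := hqc y xss x xs h1' h2'
    have := le_min (hfess' y) (hfess y)
    linarith
end

section
/- Let (X, π) be a finite symmetric two-player game with relative payoff game (X, Δ). If Δ is quasiconcave with respect to some linear order on X, then imitation is not subject to a money pump. -/
/-- Imitation is not subject to a money pump: there is a uniform bound `M` on the sum
of the opponent's relative payoffs, for every initial action of the imitator, every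
opponent sequence, and every horizon. -/
def NoMoneyPump {X : Type*} (Δ : X → X → ℝ) : Prop :=
  ∃ M : ℝ, ∀ (y0 : X) (x : ℕ → X) (T : ℕ),
    ∑ t ∈ Finset.range (T + 1), Δ (x t) (imitSeq Δ x y0 t) ≤ M

/-!
Call the switch from `a` to `b` an improving step if `0 < Δ b a`. The imitator moves only along
improving steps, each earning the opponent at most `max Δ`, while in every other round the
opponent earns `Δ (x t) (y t) ≤ 0`. So it suffices that improving steps admit no cycle: on a
finite action set a rank function then increases strictly along them and bounds their number.

A cycle can be rotated to start and end at its largest element `m` while staying below `m`.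
Quasiconcavity of the skew-symmetric `Δ` lets two improving steps `a → b → m` with `a, b ≤ m` be
replaced by the single improving step `a → m`; collapsing the cycle this way produces the
impossible improving step `m → m`.
-/

open Finset Relation

def RestrictLE {α : Type*} [LE α] (r : α → α → Prop) (m a b : α) : Prop :=
  r a b ∧ a ≤ m ∧ b ≤ m

theorem Relation.TransGen.exists_through_max {α : Type*} [LinearOrder α] {r : α → α → Prop}
    {x y : α} (h : TransGen r x y) :
    ∃ m, TransGen (RestrictLE r m) x y ∧ ReflTransGen (RestrictLE r m) x m ∧
      ReflTransGen (RestrictLE r m) m y := by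
  induction h with
  | @single y hxy =>
    rcases le_total x y with hle | hle
    · exact ⟨y, .single ⟨hxy, hle, le_rfl⟩, .single ⟨hxy, hle, le_rfl⟩, .refl⟩
    · exact ⟨x, .single ⟨hxy, le_rfl, hle⟩, .refl, .single ⟨hxy, le_rfl, hle⟩⟩
  | @tail b c _ hbc ih =>
    obtain ⟨m, hxb, hxm, hmb⟩ := ih
    have hbm : b ≤ m := by
      cases hmb with
      | refl => exact le_rfl
      | tail _ h => exact h.2.2
    rcases le_total c m with hcm | hmc
    · exact ⟨m, hxb.tail ⟨hbc, hbm, hcm⟩, hxm, hmb.tail ⟨hbc, hbm, hcm⟩⟩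
    · have hxb' : TransGen (RestrictLE r c) x b :=
        TransGen.mono (fun _ _ h => ⟨h.1, h.2.1.trans hmc, h.2.2.trans hmc⟩) x b hxb
      have hxc := hxb'.tail ⟨hbc, hbm.trans hmc, le_rfl⟩
      exact ⟨c, hxc, hxc.to_reflTransGen, .refl⟩

theorem exists_rank_of_acyclic {α : Type*} [Fintype α] {r : α → α → Prop}
    (h : ∀ a, ¬TransGen r a a) :
    ∃ f : α → ℕ, (∀ a b, r a b → f a < f b) ∧ ∀ a, f a ≤ Fintype.card α := by
  classical
  refine ⟨fun b => #{a | TransGen r a b}, fun a b hab => card_lt_card ?_, fun _ => card_le_univ _⟩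
  refine (ssubset_iff_of_subset fun c hc => ?_).2 ⟨a, ?_, ?_⟩
  · simp only [mem_filter, mem_univ, true_and] at hc ⊢
    exact hc.tail hab
  · simpa using TransGen.single hab
  · simpa using h a

section Imitation

variable {X : Type*} {Δ : X → X → ℝ}

def ImprovingStep (Δ : X → X → ℝ) (a b : X) : Prop := 0 < Δ b a

theorem sum_le_mul_rank_imitSeq {f : X → ℕ} {C : ℝ}
    (hf : ∀ a b, ImprovingStep Δ a b → f a < f b) (hC : ∀ a b, Δ a b ≤ C) (hC0 : 0 ≤ C)
    (x : ℕ → X) (y0 : X) (T : ℕ) :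
    ∑ t ∈ range T, Δ (x t) (imitSeq Δ x y0 t) ≤ C * f (imitSeq Δ x y0 T) := by
  induction T with
  | zero => simpa using mul_nonneg hC0 (Nat.cast_nonneg _)
  | succ T ih =>
    rw [sum_range_succ, imitSeq]
    split_ifs with h
    · have hrank : (f (imitSeq Δ x y0 T) : ℝ) + 1 ≤ f (x T) := by exact_mod_cast hf _ _ h
      nlinarith [hC (x T) (imitSeq Δ x y0 T)]
    · linarith [not_lt.mp h]

theorem noMoneyPump_of_rank {f : X → ℕ} {N : ℕ} {C : ℝ}
    (hf : ∀ a b, ImprovingStep Δ a b → f a < f b) (hfN : ∀ a, f a ≤ N)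
    (hC : ∀ a b, Δ a b ≤ C) (hC0 : 0 ≤ C) : NoMoneyPump Δ := by
  refine ⟨C * N, fun y0 x T => ?_⟩
  calc _ ≤ C * f (imitSeq Δ x y0 (T + 1)) := sum_le_mul_rank_imitSeq hf hC hC0 x y0 (T + 1)
    _ ≤ C * N := by gcongr; exact_mod_cast hfN _

variable [LinearOrder X]

theorem improvingStep_trans_of_le (hskew : ∀ a b, Δ a b = -Δ b a)
    (hqc : ∀ y x x' x'' : X, x < x' → x' < x'' → min (Δ x y) (Δ x'' y) ≤ Δ x' y)
    {a b c : X} (hab : ImprovingStep Δ a b) (hbc : ImprovingStep Δ b c) (ha : a ≤ c)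
    (hb : b ≤ c) : ImprovingStep Δ a c := by
  unfold ImprovingStep at *
  have hdiag : ∀ z, Δ z z = 0 := fun z => by linarith [hskew z z]
  rcases hb.lt_or_eq with hb | rfl
  swap; · linarith [hdiag b]
  rcases ha.lt_or_eq with ha | rfl
  swap; · linarith [hskew a b]
  rcases lt_trichotomy a b with hab' | rfl | hba'
  · -- if `a` weakly beat `c`, single-peakedness of `Δ · c` on `a < b < c`
    -- would let `b` weakly beat `c`
    by_contra hca
    have := (le_min (by linarith [hskew a c]) (hdiag c).ge).trans (hqc c a b c hab' hb)
    linarith [hskew b c]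
  · linarith [hdiag a]
  · -- single-peakedness of `Δ · b` on `b < a < c` would let `a` weakly beat `b`
    have := (le_min (hdiag b).ge hbc.le).trans (hqc b b a c hba' ha)
    linarith [hskew a b]

theorem improvingStep_of_transGen_restrictLE (hskew : ∀ a b, Δ a b = -Δ b a)
    (hqc : ∀ y x x' x'' : X, x < x' → x' < x'' → min (Δ x y) (Δ x'' y) ≤ Δ x' y)
    {x m : X} (h : TransGen (RestrictLE (ImprovingStep Δ) m) x m) : ImprovingStep Δ x m := by
  induction h using TransGen.head_induction_on with
  | single h => exact h.1
  | head hxy _ ih => exact improvingStep_trans_of_le hskew hqc hxy.1 ih hxy.2.1 hxy.2.2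

theorem not_transGen_improvingStep_self (hskew : ∀ a b, Δ a b = -Δ b a)
    (hqc : ∀ y x x' x'' : X, x < x' → x' < x'' → min (Δ x y) (Δ x'' y) ≤ Δ x' y)
    (z : X) : ¬TransGen (ImprovingStep Δ) z z := fun h => by
  obtain ⟨m, hzz, hzm, hmz⟩ := h.exists_through_max
  have hmm : ImprovingStep Δ m m :=
    improvingStep_of_transGen_restrictLE hskew hqc (TransGen.trans_right hmz (hzz.trans_left hzm))
  linarith [hskew m m, show 0 < Δ m m from hmm]

end Imitation

theorem stmt15_general {X : Type*} [Fintype X]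
    (π : X → X → ℝ) (Δ : X → X → ℝ) (hΔ : ∀ x y, Δ x y = π x y - π y x)
    (hqc : ∃ l : LinearOrder X, ∀ y x x' x'' : X,
      l.lt x x' → l.lt x' x'' → min (Δ x y) (Δ x'' y) ≤ Δ x' y) :
    NoMoneyPump Δ := by
  obtain ⟨l, hl⟩ := hqc
  let := l
  have hskew : ∀ a b, Δ a b = -Δ b a := fun a b => by rw [hΔ, hΔ]; ring
  obtain ⟨f, hf, hfN⟩ := exists_rank_of_acyclic (not_transGen_improvingStep_self hskew hl)
  obtain ⟨C, hC⟩ := (Set.finite_range (Function.uncurry Δ)).bddAbove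
  exact noMoneyPump_of_rank hf hfN (fun a b => (hC ⟨(a, b), rfl⟩).trans (le_max_left C 0))
    (le_max_right C 0)

theorem stmt15 {X : Type*} [Fintype X] [Nonempty X]
    (π : X → X → ℝ) (Δ : X → X → ℝ) (hΔ : ∀ x y, Δ x y = π x y - π y x)
    (hqc : ∃ l : LinearOrder X, ∀ y x x' x'' : X,
      l.lt x x' → l.lt x' x'' → min (Δ x y) (Δ x'' y) ≤ Δ x' y) :
    NoMoneyPump Δ :=
  stmt15_general π Δ hΔ hqc
end

section
/- Suppose (X, Π) is a quasiconcave quasisubmodular aggregative game. If x* is a fESS of (X, Π) and x lies between x' and x* (i.e., x' ≤ x ≤ x* or x* ≤ x ≤ x'), then Π(x, a(x, x')) ≥ Π(x', a(x, x')). -/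
/-!
Fix `z₀ = a(x*, x')`. The fESS property says `x*` is at least as good as `x'` against `z₀`,
so by quasiconcavity the intermediate action `x` is at least as good as `x'` against `z₀` too.
Moving from `z₀` to `a(x, x')` pushes the aggregate in the direction opposite to the move from
`x'` to `x`, and quasisubmodularity (a single-crossing condition) preserves the weak preference
for `x` along such a move.
-/

section AggregativeGame

variable {X Z : Type*} [LinearOrder X] {Pi : X → Z → ℝ}

theorem le_of_quasiconcave_of_between
    (hqc : ∀ (x x' x'' : X) (z : Z), x < x' → x' < x'' →
      min (Pi x z) (Pi x'' z) ≤ Pi x' z)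
    {x y w : X} {z : Z} (hyw : Pi y z ≤ Pi w z) (hbtw : (y < x ∧ x < w) ∨ (w < x ∧ x < y)) :
    Pi y z ≤ Pi x z := by
  rcases hbtw with ⟨hyx, hxw⟩ | ⟨hwx, hxy⟩
  · simpa [min_eq_left hyw] using hqc y x w z hyx hxw
  · simpa [min_eq_right hyw] using hqc w x y z hwx hxy

theorem le_of_quasisubmodular_of_opposite_move [LinearOrder Z]
    (hqsub : ∀ (x' x'' : X) (z' z'' : Z), x' < x'' → z' < z'' →
      (0 ≤ Pi x'' z'' - Pi x' z'' → 0 ≤ Pi x'' z' - Pi x' z') ∧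
      (0 < Pi x'' z'' - Pi x' z'' → 0 < Pi x'' z' - Pi x' z'))
    {x x' : X} {z z₀ : Z} (h₀ : Pi x' z₀ ≤ Pi x z₀)
    (hmove : (x' < x ∧ z < z₀) ∨ (x < x' ∧ z₀ < z)) :
    Pi x' z ≤ Pi x z := by
  rcases hmove with ⟨hx, hz⟩ | ⟨hx, hz⟩
  · linarith [(hqsub x' x z z₀ hx hz).1 (by linarith)]
  · by_contra! h
    linarith [(hqsub x x' z₀ z hx hz).2 (by linarith)]

end AggregativeGame

theorem stmt16_general
    {X Z : Type*} [LinearOrder X] [LinearOrder Z]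
    (agg : X → X → Z)
    (hmono : ∀ x' x'' y' y'' : X, x' ≤ x'' → y' ≤ y'' → (x'', y'') ≠ (x', y') →
      agg x' y' < agg x'' y'')
    (Pi : X → Z → ℝ)
    (hqsub : ∀ (x' x'' : X) (z' z'' : Z), x' < x'' → z' < z'' →
      (0 ≤ Pi x'' z'' - Pi x' z'' → 0 ≤ Pi x'' z' - Pi x' z') ∧
      (0 < Pi x'' z'' - Pi x' z'' → 0 < Pi x'' z' - Pi x' z'))
    (hqc : ∀ (x x' x'' : X) (z : Z), x < x' → x' < x'' →
      min (Pi x z) (Pi x'' z) ≤ Pi x' z)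
    (xs : X) (hfess : ∀ x : X, Pi x (agg xs x) ≤ Pi xs (agg xs x))
    (x x' : X) (hbet : (x' ≤ x ∧ x ≤ xs) ∨ (xs ≤ x ∧ x ≤ x')) :
    Pi x' (agg x x') ≤ Pi x (agg x x') := by
  rcases eq_or_ne x x' with rfl | hxx'
  · exact le_rfl
  rcases eq_or_ne x xs with rfl | hxxs
  · exact hfess x'
  have agg_lt_left {u v : X} (huv : u < v) : agg u x' < agg v x' :=
    hmono u v x' x' huv.le le_rfl (by simp [huv.ne'])
  have hbtw : (x' < x ∧ x < xs) ∨ (xs < x ∧ x < x') := by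
    rcases hbet with ⟨h₁, h₂⟩ | ⟨h₁, h₂⟩
    · exact .inl ⟨lt_of_le_of_ne h₁ hxx'.symm, lt_of_le_of_ne h₂ hxxs⟩
    · exact .inr ⟨lt_of_le_of_ne h₁ hxxs.symm, lt_of_le_of_ne h₂ hxx'⟩
  have h₀ : Pi x' (agg xs x') ≤ Pi x (agg xs x') :=
    le_of_quasiconcave_of_between hqc (hfess x') hbtw
  refine le_of_quasisubmodular_of_opposite_move hqsub h₀ ?_
  rcases hbtw with ⟨hx'x, hxxs⟩ | ⟨hxsx, hxx'⟩
  · exact .inl ⟨hx'x, agg_lt_left hxxs⟩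
  · exact .inr ⟨hxx', agg_lt_left hxsx⟩

theorem stmt16
    {X Z : Type*} [LinearOrder X] [LinearOrder Z] [Nonempty X]
    (agg : X → X → Z)
    (hsym : ∀ x y : X, agg x y = agg y x)
    (hmono : ∀ x' x'' y' y'' : X, x' ≤ x'' → y' ≤ y'' → (x'', y'') ≠ (x', y') →
      agg x' y' < agg x'' y'')
    (Pi : X → Z → ℝ)
    (hqsub : ∀ (x' x'' : X) (z' z'' : Z), x' < x'' → z' < z'' →
      (0 ≤ Pi x'' z'' - Pi x' z'' → 0 ≤ Pi x'' z' - Pi x' z') ∧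
      (0 < Pi x'' z'' - Pi x' z'' → 0 < Pi x'' z' - Pi x' z'))
    (hqc : ∀ (x x' x'' : X) (z : Z), x < x' → x' < x'' →
      min (Pi x z) (Pi x'' z) ≤ Pi x' z)
    (xs : X) (hfess : ∀ x : X, Pi x (agg xs x) ≤ Pi xs (agg xs x))
    (x x' : X) (hbet : (x' ≤ x ∧ x ≤ xs) ∨ (xs ≤ x ∧ x ≤ x')) :
    Pi x' (agg x x') ≤ Pi x (agg x x') :=
  stmt16_general agg hmono Pi hqsub hqc xs hfess x x' hbet
end

section
/- Let (X, Π) be a finite strictly quasiconvex quasisupermodular aggregative game. If x* is a fESS of (X, Π), then x* = max X or x* = min X. -/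
theorem stmt18
    {X Z : Type*} [LinearOrder X] [LinearOrder Z] [Nonempty X]
    (agg : X → X → Z)
    (hsym : ∀ x y : X, agg x y = agg y x)
    (hmono : ∀ x' x'' y' y'' : X, x' ≤ x'' → y' ≤ y'' → (x'', y'') ≠ (x', y') →
      agg x' y' < agg x'' y'')
    (Pi : X → Z → ℝ)
    [Fintype X]
    (hqsup : ∀ (x' x'' : X) (z' z'' : Z), x' < x'' → z' < z'' →
      (0 ≤ Pi x'' z' - Pi x' z' → 0 ≤ Pi x'' z'' - Pi x' z'') ∧
      (0 < Pi x'' z' - Pi x' z' → 0 < Pi x'' z'' - Pi x' z''))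
    (hsqcvx : ∀ (x x' x'' : X) (z : Z), x < x' → x' < x'' →
      Pi x' z < max (Pi x z) (Pi x'' z))
    (xs : X) (hfess : ∀ x : X, Pi x (agg xs x) ≤ Pi xs (agg xs x)) :
    (∀ x : X, x ≤ xs) ∨ (∀ x : X, xs ≤ x) := by
  by_contra h
  push_neg at h
  obtain ⟨⟨a, ha⟩, ⟨b, hb⟩⟩ := h
  -- ha : xs < a, hb : b < xs
  have hz := hsqcvx b xs a (agg xs xs) hb ha
  rcases max_cases (Pi b (agg xs xs)) (Pi a (agg xs xs)) with ⟨heq, _⟩ | ⟨heq, _⟩ <;>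
    rw [heq] at hz
  · -- Pi b (agg xs xs) > Pi xs (agg xs xs)
    have hzlt : agg xs b < agg xs xs := by
      rw [hsym xs b, hsym xs xs]
      exact hmono b xs xs xs hb.le le_rfl (by simp [hb.ne'])
    have := (hqsup b xs (agg xs b) (agg xs xs) hb hzlt).1
      (by linarith [hfess b])
    linarith
  · -- Pi a (agg xs xs) > Pi xs (agg xs xs)
    have hzlt : agg xs xs < agg xs a := by
      exact hmono xs xs xs a le_rfl ha.le (by simp [ha.ne'])
    have := (hqsup xs a (agg xs xs) (agg xs a) ha hzlt).2 (by linarith)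
    linarith [hfess a]
end

section
/- If (X, Π) is a finite strictly quasiconvex quasisupermodular aggregative game for which a fESS exists, then in the induced symmetric game with payoff π(x, y) = Π(x, a(x, y)), imitation is not subject to a money pump. -/
theorem stmt19
    {X Z : Type*} [LinearOrder X] [LinearOrder Z] [Nonempty X]
    (agg : X → X → Z)
    (hsym : ∀ x y : X, agg x y = agg y x)
    (hmono : ∀ x' x'' y' y'' : X, x' ≤ x'' → y' ≤ y'' → (x'', y'') ≠ (x', y') →
      agg x' y' < agg x'' y'')
    (Pi : X → Z → ℝ)
    [Fintype X]
    (hqsup : ∀ (x' x'' : X) (z' z'' : Z), x' < x'' → z' < z'' →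
      (0 ≤ Pi x'' z' - Pi x' z' → 0 ≤ Pi x'' z'' - Pi x' z'') ∧
      (0 < Pi x'' z' - Pi x' z' → 0 < Pi x'' z'' - Pi x' z''))
    (hsqcvx : ∀ (x x' x'' : X) (z : Z), x < x' → x' < x'' →
      Pi x' z < max (Pi x z) (Pi x'' z))
    (hfess : ∃ xs : X, ∀ x : X, Pi x (agg xs x) ≤ Pi xs (agg xs x))
    (Δ : X → X → ℝ)
    (hΔ : ∀ x y : X, Δ x y = Pi x (agg x y) - Pi y (agg y x)) :
    NoMoneyPump Δ := by
  classical
  -- basic facts about Δ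
  have hΔ' : ∀ x y : X, Δ x y = Pi x (agg x y) - Pi y (agg x y) := by
    intro x y; rw [hΔ, hsym y x]
  have hasym : ∀ x y : X, Δ y x = - Δ x y := by
    intro x y; rw [hΔ' x y, hΔ' y x, hsym y x]; ring
  have hrefl : ∀ x : X, Δ x x = 0 := by intro x; rw [hΔ']; ring
  -- L1 : a < b < c, Δ b a ≥ 0 → Δ c a > 0
  have L1 : ∀ a b c : X, a < b → b < c → 0 ≤ Δ b a → 0 < Δ c a := by
    intro a b c hab hbc h
    have hz : agg a b < agg a c := by
      apply hmono a a b c le_rfl hbc.le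
      simp only [ne_eq, Prod.mk.injEq, not_and]
      exact fun _ => hbc.ne'
    have h1 : 0 ≤ Pi b (agg a b) - Pi a (agg a b) := by
      rw [hΔ' b a, hsym b a] at h; linarith
    have h2 : 0 ≤ Pi b (agg a c) - Pi a (agg a c) := (hqsup a b _ _ hab hz).1 h1
    have h3 := hsqcvx a b c (agg a c) hab hbc
    have h4 : Pi b (agg a c) < Pi c (agg a c) := by
      rcases lt_max_iff.mp h3 with h' | h'
      · linarith
      · exact h'
    rw [hΔ' c a, hsym c a]
    linarith
  -- L2 : a < b < c, Δ c b ≤ 0 → Δ c a < 0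
  have L2 : ∀ a b c : X, a < b → b < c → Δ c b ≤ 0 → Δ c a < 0 := by
    intro a b c hab hbc h
    have hz : agg a c < agg b c := by
      apply hmono a b c c hab.le le_rfl
      simp only [ne_eq, Prod.mk.injEq, not_and]
      exact fun h' _ => hab.ne' h'
    have h1 : Pi c (agg b c) - Pi b (agg b c) ≤ 0 := by
      rw [hΔ' c b, hsym c b] at h; linarith
    have h2 : Pi c (agg a c) - Pi b (agg a c) ≤ 0 := by
      by_contra hcon
      push_neg at hcon
      have := (hqsup b c _ _ hbc hz).2 (by linarith)
      linarith
    have h3 := hsqcvx a b c (agg a c) hab hbc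
    have h4 : Pi b (agg a c) < Pi a (agg a c) := by
      rcases lt_max_iff.mp h3 with h' | h'
      · exact h'
      · linarith
    rw [hΔ' c a, hsym c a]
    linarith
  -- strict transitivity of the beating relation
  have KEY : ∀ x y w : X, 0 < Δ x y → 0 < Δ y w → 0 < Δ x w := by
    intro x y w hxy hyw
    rcases lt_trichotomy x y with h1 | h1 | h1
    · -- x < y
      rcases lt_trichotomy w x with h2 | h2 | h2
      · -- w < x < y : Δ y x ≤ 0 (since Δ x y > 0), L2 ⇒ Δ y w < 0 contra
        exfalso
        have hyx : Δ y x ≤ 0 := by rw [hasym x y]; linarith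
        have := L2 w x y h2 h1 hyx
        linarith
      · -- w = x : Δ x y > 0 and Δ y x > 0 contradict
        exfalso; rw [← h2] at hxy; rw [hasym] at hyw; linarith
      · rcases lt_trichotomy w y with h3 | h3 | h3
        · -- x < w < y : suppose Δ x w ≤ 0, i.e. Δ w x ≥ 0, L1 (x<w<y) ⇒ Δ y x > 0 contra
          by_contra hcon
          push_neg at hcon
          have : 0 ≤ Δ w x := by rw [hasym]; linarith
          have := L1 x w y h2 h3 this
          rw [hasym] at this
          linarith
        · exfalso; rw [h3, hrefl] at hyw; linarith
        · -- x < y < w : L1 (x<y<w) with Δ y x ... need: 0 < Δ y w but y < w and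
          -- Δ w y < 0; but also hxy gives via L1 x y w : 0 ≤ Δ y x? no.
          -- hypotheses inconsistent: Δ y w > 0 with y < w means Δ w y < 0 ≤ 0,
          have hwy : Δ w y ≤ 0 := by rw [hasym]; linarith
          have := L2 x y w h1 h3 hwy
          rw [hasym x w] at this
          linarith
    · -- x = y
      rw [h1]; exact hyw
    · -- y < x
      rcases lt_trichotomy w y with h2 | h2 | h2
      · -- w < y < x : L1 w y x with Δ y w ≥ 0 ⇒ Δ x w > 0
        exact L1 w y x h2 h1 hyw.le
      · exfalso; rw [h2, hrefl] at hyw; linarith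
      · rcases lt_trichotomy w x with h3 | h3 | h3
        · -- y < w < x : suppose Δ x w ≤ 0, L2 y w x ⇒ Δ x y < 0 contra
          by_contra hcon
          push_neg at hcon
          have := L2 y w x h2 h3 hcon
          linarith
        · exfalso; rw [h3, hasym] at hyw; linarith
        · -- y < x < w : L1 y x w with Δ x y ≥ 0 ⇒ Δ w y > 0, contra Δ y w > 0
          exfalso
          have := L1 y x w h1 h3 hxy.le
          rw [hasym] at this
          linarith
  -- potential function
  set f : X → ℕ := fun x => (Finset.univ.filter (fun w => 0 < Δ x w)).card with hf
  have hfcard : ∀ x : X, f x ≤ Fintype.card X := by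
    intro x; exact Finset.card_filter_le _ _
  have hpot : ∀ x y : X, 0 < Δ x y → f y < f x := by
    intro x y hxy
    apply Finset.card_lt_card
    constructor
    · intro w hw
      simp only [Finset.mem_filter, Finset.mem_univ, true_and] at hw ⊢
      exact KEY x y w hxy hw
    · intro hsub
      have hy : y ∈ Finset.univ.filter (fun w => 0 < Δ x w) := by
        simp only [Finset.mem_filter, Finset.mem_univ, true_and]; exact hxy
      have := hsub hy
      simp only [Finset.mem_filter, Finset.mem_univ, true_and, hrefl] at this
      exact lt_irrefl 0 this
  -- bound on Δ
  set B : ℝ := ∑ p : X × X, max (Δ p.1 p.2) 0 with hB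
  have hBnonneg : 0 ≤ B := Finset.sum_nonneg fun p _ => le_max_right _ _
  have hBbound : ∀ x y : X, Δ x y ≤ B := by
    intro x y
    calc Δ x y ≤ max (Δ x y) 0 := le_max_left _ _
    _ ≤ B := Finset.single_le_sum (f := fun p : X × X => max (Δ p.1 p.2) 0)
        (fun p _ => le_max_right _ _) (Finset.mem_univ (x, y))
  refine ⟨B * Fintype.card X, ?_⟩
  intro y0 x T
  have main : ∀ n : ℕ, ∑ t ∈ Finset.range n, Δ (x t) (imitSeq Δ x y0 t)
      ≤ B * ((f (imitSeq Δ x y0 n) : ℝ) - (f (imitSeq Δ x y0 0) : ℝ)) := by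
    intro n
    induction n with
    | zero => simp
    | succ n ih =>
      rw [Finset.sum_range_succ]
      have hstep : Δ (x n) (imitSeq Δ x y0 n)
          ≤ B * ((f (imitSeq Δ x y0 (n+1)) : ℝ) - (f (imitSeq Δ x y0 n) : ℝ)) := by
        by_cases hpos : 0 < Δ (x n) (imitSeq Δ x y0 n)
        · have hy : imitSeq Δ x y0 (n+1) = x n := by
            rw [imitSeq, if_pos hpos]
          rw [hy]
          have h1 : f (imitSeq Δ x y0 n) < f (x n) := hpot _ _ hpos
          have h2 : (1 : ℝ) ≤ (f (x n) : ℝ) - (f (imitSeq Δ x y0 n) : ℝ) := by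
            have : f (imitSeq Δ x y0 n) + 1 ≤ f (x n) := h1
            have := Nat.cast_le (α := ℝ).mpr this
            push_cast at this
            linarith
          calc Δ (x n) (imitSeq Δ x y0 n) ≤ B := hBbound _ _
          _ = B * 1 := by ring
          _ ≤ B * ((f (x n) : ℝ) - (f (imitSeq Δ x y0 n) : ℝ)) :=
              mul_le_mul_of_nonneg_left h2 hBnonneg
        · have hy : imitSeq Δ x y0 (n+1) = imitSeq Δ x y0 n := by
            rw [imitSeq, if_neg hpos]
          rw [hy]
          push_neg at hpos
          simp only [sub_self, mul_zero]
          exact hpos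
      linarith
  calc ∑ t ∈ Finset.range (T+1), Δ (x t) (imitSeq Δ x y0 t)
      ≤ B * ((f (imitSeq Δ x y0 (T+1)) : ℝ) - (f (imitSeq Δ x y0 0) : ℝ)) := main (T+1)
    _ ≤ B * (Fintype.card X : ℝ) := by
        apply mul_le_mul_of_nonneg_left _ hBnonneg
        have h1 : (f (imitSeq Δ x y0 (T+1)) : ℝ) ≤ (Fintype.card X : ℝ) :=
          Nat.cast_le.mpr (hfcard _)
        have h2 : (0 : ℝ) ≤ (f (imitSeq Δ x y0 0) : ℝ) := Nat.cast_nonneg _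
        linarith
end
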